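/- Let $p_k, \sigma_k > 0$ for $k = 1, \dots, K$ and suppose estimates $\hat p_k, \hat\sigma_k \ge 0$ satisfy $|\sqrt{\hat p_k}\hat\sigma_k - \sqrt{p_k}\sigma_k| \le \epsilon$ for all $k$, where $\epsilon < \frac{1}{2K}\sum_i \sqrt{p_i}\sigma_i$. Then for $T_k^* = \sqrt{p_k}\sigma_k / \sum_i \sqrt{p_i}\sigma_i$ and $\hat T_k = \sqrt{\hat p_k}\hat\sigma_k / \sum_i \sqrt{\hat p_i}\hat\sigma_i$, we have $|\hat T_k - T_k^*| \le \frac{4K\epsilon}{\sum_i \sqrt{p_i}\sigma_i}$ for every $k$. -/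

import Mathlib

open Finset

/-- Stability of the normalized optimal allocation: if the plug-in products
`√p̂_k σ̂_k` are uniformly `ε`-close to `√p_k σ_k` with `ε < (∑ᵢ √p_i σ_i)/(2K)`,
then the plug-in allocation fractions satisfy `|T̂_k - T_k*| ≤ 4Kε / ∑ᵢ √p_i σ_i`. -/
theorem stmt16 (K : ℕ) (p σ : Fin K → ℝ) (hp : ∀ k, 0 < p k) (hσ : ∀ k, 0 < σ k)
    (phat σhat : Fin K → ℝ) (hphat : ∀ k, 0 ≤ phat k) (hσhat : ∀ k, 0 ≤ σhat k)
    (ε : ℝ)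
    (hclose : ∀ k, |Real.sqrt (phat k) * σhat k - Real.sqrt (p k) * σ k| ≤ ε)
    (hε : ε < (1 / (2 * K)) * ∑ i, Real.sqrt (p i) * σ i)
    (Tstar That : Fin K → ℝ)
    (hTstar : ∀ k, Tstar k = Real.sqrt (p k) * σ k / ∑ i, Real.sqrt (p i) * σ i)
    (hThat : ∀ k, That k = Real.sqrt (phat k) * σhat k / ∑ i, Real.sqrt (phat i) * σhat i) :
    ∀ k, |That k - Tstar k| ≤ 4 * K * ε / ∑ i, Real.sqrt (p i) * σ i := by
  intro k
  have hK1 : 1 ≤ K := k.pos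
  have hKR : (1:ℝ) ≤ K := by exact_mod_cast hK1
  set S := ∑ i, Real.sqrt (p i) * σ i with hS
  set Shat := ∑ i, Real.sqrt (phat i) * σhat i with hSh
  have hterm : ∀ i, 0 < Real.sqrt (p i) * σ i := fun i =>
    mul_pos (Real.sqrt_pos.2 (hp i)) (hσ i)
  have hSpos : 0 < S := Finset.sum_pos (fun i _ => hterm i) ⟨k, mem_univ k⟩
  have hε0 : 0 ≤ ε := le_trans (abs_nonneg _) (hclose k)
  have hdiff : |Shat - S| ≤ K * ε := by
    rw [hSh, hS, ← Finset.sum_sub_distrib]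
    calc |∑ i, (Real.sqrt (phat i) * σhat i - Real.sqrt (p i) * σ i)|
        ≤ ∑ i, |Real.sqrt (phat i) * σhat i - Real.sqrt (p i) * σ i| :=
          Finset.abs_sum_le_sum_abs _ _
      _ ≤ ∑ _i : Fin K, ε := Finset.sum_le_sum (fun i _ => hclose i)
      _ = K * ε := by simp [mul_comm]
  have hKεlt : (K:ℝ) * ε < S / 2 := by
    have hKpos : (0:ℝ) < K := by linarith
    have := hε
    rw [div_mul_eq_mul_div, one_mul, lt_div_iff₀ (by positivity)] at this
    nlinarith
  have hdiff' := abs_le.1 hdiff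
  have hShat : S / 2 < Shat := by linarith [hdiff'.1]
  have hShatpos : 0 < Shat := by linarith
  set a := Real.sqrt (p k) * σ k with ha
  set b := Real.sqrt (phat k) * σhat k with hb
  have haS : a ≤ S := Finset.single_le_sum (fun i _ => (hterm i).le) (mem_univ k)
  have hapos : 0 < a := hterm k
  have hba' : |b - a| ≤ ε := hclose k
  have h1 : |b * S - a * Shat| ≤ 2 * K * ε * S := by
    have heq : b * S - a * Shat = (b - a) * S + a * (S - Shat) := by ring
    rw [heq]
    calc |(b - a) * S + a * (S - Shat)| ≤ |(b - a) * S| + |a * (S - Shat)| := abs_add_le _ _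
      _ = |b - a| * S + a * |Shat - S| := by
          rw [abs_mul, abs_mul, abs_of_pos hSpos, abs_of_pos hapos, abs_sub_comm S Shat]
      _ ≤ 2 * K * ε * S := by
          nlinarith [mul_le_mul_of_nonneg_right hba' hSpos.le,
            mul_le_mul_of_nonneg_left hdiff hapos.le,
            mul_nonneg (mul_nonneg (sub_nonneg.2 hKR) hε0) hSpos.le,
            mul_nonneg (mul_nonneg (sub_nonneg.2 haS) (by positivity : (0:ℝ) ≤ (K:ℝ))) hε0]
  have h2 : That k - Tstar k = (b * S - a * Shat) / (Shat * S) := by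
    rw [hThat, hTstar, div_sub_div _ _ (ne_of_gt hShatpos) (ne_of_gt hSpos)]
    rw [hb, ha]; ring
  rw [h2, abs_div, abs_of_pos (mul_pos hShatpos hSpos),
    div_le_div_iff₀ (mul_pos hShatpos hSpos) hSpos]
  have hKnn : (0:ℝ) ≤ (K:ℝ) := by positivity
  nlinarith [mul_le_mul_of_nonneg_right h1 hSpos.le,
    mul_nonneg (mul_nonneg (mul_nonneg hKnn hε0) hSpos.le)
      (by linarith : (0:ℝ) ≤ 2 * Shat - S)]
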